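/- arXiv:1805.02115 — 2 statements merged into one kernel-verified Lean document; each statement's English description precedes it below -/
import Mathlib

section
/- Let 1 ≤ p < ∞, let X₁, …, Xₙ, Y be real Banach spaces, and let T : X₁ × ⋯ × Xₙ → Y be a continuous n-linear operator that is Lipschitz p-summing. Then T is Dunford–Pettis: for every sequence (u^k)_k in X₁ × ⋯ × Xₙ such that the scalar sequence (φ(u^k))_k converges for every continuous n-linear form φ on X₁ × ⋯ × Xₙ, the sequence (T(u^k))_k converges in the norm of Y. -/
open scoped BigOperators Topology
open Filter
open Function

/-- `T` is Lipschitz `p`-summing with constant `c`. -/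
def LipschitzPSumming {n : ℕ} {X : Fin n → Type*} [∀ i, NormedAddCommGroup (X i)]
    [∀ i, NormedSpace ℝ (X i)] {Y : Type*} [NormedAddCommGroup Y] [NormedSpace ℝ Y]
    (p c : ℝ) (T : ContinuousMultilinearMap ℝ X Y) : Prop :=
  ∀ (k : ℕ) (u v : Fin k → ((i : Fin n) → X i)),
    (∑ i, ‖T (u i) - T (v i)‖ ^ p) ^ (1 / p) ≤
      c * ⨆ φ : {φ : ContinuousMultilinearMap ℝ X ℝ // ‖φ‖ ≤ 1},
        (∑ i, |φ.1 (u i) - φ.1 (v i)| ^ p) ^ (1 / p)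

/-- A continuous multilinear operator is Dunford–Pettis if it sends every sequence that
is weakly Cauchy in the Segre cone (i.e. `(φ(uᵏ))ₖ` converges for every continuous
multilinear form `φ`) to a norm-convergent sequence. -/
def IsDunfordPettisMultilinear {n : ℕ} {X : Fin n → Type*} [∀ i, NormedAddCommGroup (X i)]
    [∀ i, NormedSpace ℝ (X i)] {Y : Type*} [NormedAddCommGroup Y] [NormedSpace ℝ Y]
    (T : ContinuousMultilinearMap ℝ X Y) : Prop :=
  ∀ u : ℕ → ((i : Fin n) → X i),
    (∀ φ : ContinuousMultilinearMap ℝ X ℝ, ∃ L : ℝ, Tendsto (fun k => φ (u k)) atTop (𝓝 L)) →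
    ∃ y : Y, Tendsto (fun k => T (u k)) atTop (𝓝 y)

/-! ### Combinatorial part: a Pták-type lemma -/

/-- One-step extension relation on finite subsets of `ℕ` within a family `ℱ`. -/
private def ptakRel (ℱ : Set (Finset ℕ)) : Finset ℕ → Finset ℕ → Prop :=
  fun S' S => S' ∈ ℱ ∧ ∃ k, (∀ x ∈ S, x < k) ∧ S' = insert k S

/-- Sets all of whose elements lie above some node of `𝒜` and which extend it inside `ℱ`. -/
private def gfam (ℱ : Set (Finset ℕ)) (𝒜 : Finset (Finset ℕ)) : Set (Finset ℕ) :=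
  {K | ∃ S ∈ 𝒜, (∀ x ∈ S, ∀ k ∈ K, x < k) ∧ S ∪ K ∈ ℱ}

private lemma gfam_hered {ℱ : Set (Finset ℕ)} (her : ∀ K ∈ ℱ, ∀ K' ⊆ K, K' ∈ ℱ)
    {𝒜 : Finset (Finset ℕ)} {K K' : Finset ℕ} (hK : K ∈ gfam ℱ 𝒜) (hsub : K' ⊆ K) :
    K' ∈ gfam ℱ 𝒜 := by
  obtain ⟨S, hS, habove, hmem⟩ := hK
  exact ⟨S, hS, fun x hx k hk => habove x hx k (hsub hk),
    her _ hmem _ (Finset.union_subset_union (le_refl S) hsub)⟩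

private lemma ptak_ind (ℱ : Set (Finset ℕ)) (her : ∀ K ∈ ℱ, ∀ K' ⊆ K, K' ∈ ℱ)
    (ρ : Finset ℕ → Ordinal) (hρ : ∀ {S' S}, ptakRel ℱ S' S → ρ S' < ρ S)
    (μ : Ordinal) : ∀ 𝒜 : Finset (Finset ℕ), (∀ S ∈ 𝒜, ρ S < μ) →
    ∀ ε : ℝ, 0 < ε → ∀ N : ℕ, ∃ (s : Finset ℕ) (w : ℕ → ℝ),
      (∀ m ∈ s, N < m) ∧ (∀ m, 0 ≤ w m) ∧ (∀ m ∉ s, w m = 0) ∧ (∑ m ∈ s, w m) = 1 ∧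
      ∀ K ⊆ s, K ∈ gfam ℱ 𝒜 → (∑ m ∈ K, w m) < ε := by
  classical
  induction μ using Ordinal.induction with
  | h μ IH =>
  intro 𝒜 h𝒜 ε hε N
  -- choose the number of blocks
  obtain ⟨r, hr⟩ := exists_nat_gt (2 / ε)
  have hrpos : (0 : ℝ) < r := lt_trans (by positivity) hr
  have h1r : 1 / (r : ℝ) < ε / 2 := by
    rw [div_lt_div_iff₀ hrpos (by norm_num : (0:ℝ) < 2)]
    have := (div_lt_iff₀ hε).1 hr
    nlinarith
  -- block construction
  have blocks : ∀ j : ℕ, ∃ (U : Finset ℕ) (w : ℕ → ℝ),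
      (∀ m ∈ U, N < m) ∧ (∀ m, 0 ≤ w m) ∧ (∀ m ∉ U, w m = 0) ∧
      (∑ m ∈ U, w m) = j ∧
      ∀ K ⊆ U, K ∈ gfam ℱ 𝒜 → (∑ m ∈ K, w m) ≤ 1 + j * (ε / 2) := by
    intro j
    induction j with
    | zero =>
      refine ⟨∅, fun _ => 0, by simp, fun _ => le_refl 0, fun _ _ => rfl, by simp, ?_⟩
      intro K hK _
      have : K = ∅ := Finset.subset_empty.1 hK
      simp [this]
    | succ j IHj =>
      obtain ⟨U, w, hUN, hw0, hwz, hwsum, hwbd⟩ := IHj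
      set N' : ℕ := max N (U.sup id) with hN'
      have hUle : ∀ m ∈ U, m ≤ N' := fun m hm =>
        le_trans (Finset.le_sup (f := id) hm) (le_max_right _ _)
      -- the family of one-step extensions through elements of U
      set 𝒜' : Finset (Finset ℕ) := 𝒜.biUnion (fun S =>
        (U.filter (fun k => (∀ x ∈ S, x < k) ∧ insert k S ∈ ℱ)).image
          (fun k => insert k S)) with h𝒜'
      have h𝒜'spec : ∀ S' ∈ 𝒜', ∃ S ∈ 𝒜, ∃ k ∈ U, (∀ x ∈ S, x < k) ∧ insert k S ∈ ℱ ∧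
          S' = insert k S := by
        intro S' hS'
        simp only [h𝒜', Finset.mem_biUnion, Finset.mem_image, Finset.mem_filter] at hS'
        obtain ⟨S, hS, k, ⟨hkU, hab, hmem⟩, hins⟩ := hS'
        exact ⟨S, hS, k, hkU, hab, hmem, hins.symm⟩
      have h𝒜'mem : ∀ S ∈ 𝒜, ∀ k ∈ U, (∀ x ∈ S, x < k) → insert k S ∈ ℱ →
          insert k S ∈ 𝒜' := by
        intro S hS k hk hab hmem
        simp only [h𝒜', Finset.mem_biUnion, Finset.mem_image, Finset.mem_filter]
        exact ⟨S, hS, k, ⟨hk, hab, hmem⟩, rfl⟩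
      -- get the new block
      have hblock : ∃ (s' : Finset ℕ) (w' : ℕ → ℝ),
          (∀ m ∈ s', N' < m) ∧ (∀ m, 0 ≤ w' m) ∧ (∀ m ∉ s', w' m = 0) ∧
          (∑ m ∈ s', w' m) = 1 ∧
          ∀ K ⊆ s', K ∈ gfam ℱ 𝒜' → (∑ m ∈ K, w' m) < ε / 2 := by
        rcases Finset.eq_empty_or_nonempty 𝒜' with hemp | hne
        · refine ⟨{N' + 1}, fun m => if m = N' + 1 then 1 else 0, by simp, ?_, ?_, by simp, ?_⟩
          · intro m; by_cases h : m = N' + 1 <;> simp [h]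
          · intro m hm; simp only [Finset.mem_singleton] at hm; simp [hm]
          · intro K _ hK
            exfalso
            obtain ⟨S, hS, -, -⟩ := hK
            rw [hemp] at hS
            exact absurd hS (Finset.notMem_empty S)
        · set ν : Ordinal := 𝒜.sup ρ with hν
          have hν1 : ∀ S' ∈ 𝒜', ρ S' < ν := by
            intro S' hS'
            obtain ⟨S, hS, k, hkU, hab, hmem, hins⟩ := h𝒜'spec S' hS'
            have : ρ S' < ρ S := hρ ⟨hins ▸ hmem, k, hab, hins⟩
            exact lt_of_lt_of_le this (Finset.le_sup hS)
          have hν2 : ν < μ := by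
            obtain ⟨S', hS'⟩ := hne
            obtain ⟨S, hS, -⟩ := h𝒜'spec S' hS'
            have hpos : ⊥ < μ := lt_of_le_of_lt bot_le (h𝒜 S hS)
            exact (Finset.sup_lt_iff hpos).2 (fun S hS => h𝒜 S hS)
          exact IH ν hν2 𝒜' hν1 (ε / 2) (by positivity) N'
      obtain ⟨s', w', hs'N, hw'0, hw'z, hw'sum, hw'bd⟩ := hblock
      -- combine
      have hdisj : Disjoint U s' := by
        rw [Finset.disjoint_left]
        intro m hmU hms'
        exact absurd (hs'N m hms') (not_lt.2 (hUle m hmU))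
      have hwzs' : ∀ m ∈ s', w m = 0 := fun m hm => hwz m (fun hmU =>
        absurd (hs'N m hm) (not_lt.2 (hUle m hmU)))
      have hw'zU : ∀ m ∈ U, w' m = 0 := fun m hm => hw'z m (fun hms' =>
        absurd (hs'N m hms') (not_lt.2 (hUle m hm)))
      refine ⟨U ∪ s', fun m => w m + w' m, ?_, ?_, ?_, ?_, ?_⟩
      · intro m hm
        rcases Finset.mem_union.1 hm with h | h
        · exact hUN m h
        · exact lt_of_le_of_lt (le_max_left _ _) (hs'N m h)
      · intro m; exact add_nonneg (hw0 m) (hw'0 m)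
      · intro m hm
        rw [Finset.mem_union] at hm
        push_neg at hm
        show w m + w' m = 0
        rw [hwz m hm.1, hw'z m hm.2, add_zero]
      · rw [Finset.sum_union hdisj]
        have e1 : (∑ m ∈ U, (w m + w' m)) = ∑ m ∈ U, w m := by
          rw [Finset.sum_add_distrib]
          have : (∑ m ∈ U, w' m) = 0 := Finset.sum_eq_zero hw'zU
          rw [this, add_zero]
        have e2 : (∑ m ∈ s', (w m + w' m)) = ∑ m ∈ s', w' m := by
          rw [Finset.sum_add_distrib]
          have : (∑ m ∈ s', w m) = 0 := Finset.sum_eq_zero hwzs'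
          rw [this, zero_add]
        rw [e1, e2, hwsum, hw'sum]
        push_cast
        ring
      · intro K hK hKg
        have hsplit : (∑ m ∈ K, (w m + w' m)) = (∑ m ∈ K ∩ U, w m) + (∑ m ∈ K ∩ s', w' m) := by
          rw [Finset.sum_add_distrib]
          congr 1
          · refine (Finset.sum_subset (Finset.inter_subset_left) ?_).symm
            intro m hm hm'
            refine hwz m ?_
            intro hmU
            exact hm' (Finset.mem_inter.2 ⟨hm, hmU⟩)
          · refine (Finset.sum_subset (Finset.inter_subset_left) ?_).symm
            intro m hm hm'
            refine hw'z m ?_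
            intro hms'
            exact hm' (Finset.mem_inter.2 ⟨hm, hms'⟩)
        rw [hsplit]
        have hKU : (∑ m ∈ K ∩ U, w m) ≤ 1 + j * (ε / 2) :=
          hwbd _ (Finset.inter_subset_right) (gfam_hered her hKg (Finset.inter_subset_left))
        rcases Finset.eq_empty_or_nonempty (K ∩ U) with hKUe | hKUne
        · -- K is entirely inside s'
          have : (∑ m ∈ K ∩ s', w' m) ≤ 1 := by
            have h1 : (∑ m ∈ K ∩ s', w' m) ≤ ∑ m ∈ s', w' m :=
              Finset.sum_le_sum_of_subset_of_nonneg (Finset.inter_subset_right)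
                (fun m _ _ => hw'0 m)
            rw [hw'sum] at h1; exact h1
          have hz : (∑ m ∈ K ∩ U, w m) = 0 := by simp [hKUe]
          rw [hz, zero_add]
          have h4 : (0:ℝ) ≤ j * (ε/2) := by positivity
          nlinarith [hε]
        · -- min K lies in U
          obtain ⟨aa, ha⟩ := hKUne
          have haK : aa ∈ K := (Finset.mem_inter.1 ha).1
          have haU : aa ∈ U := (Finset.mem_inter.1 ha).2
          have hKne : K.Nonempty := ⟨aa, haK⟩
          set k₀ : ℕ := K.min' hKne with hk₀
          have hk₀K : k₀ ∈ K := K.min'_mem hKne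
          have hk₀U : k₀ ∈ U := by
            rcases Finset.mem_union.1 (hK hk₀K) with h | h
            · exact h
            · exfalso
              have h1 : k₀ ≤ aa := K.min'_le aa haK
              have h2 : aa ≤ N' := hUle aa haU
              exact absurd (hs'N k₀ h) (not_lt.2 (le_trans h1 h2))
          obtain ⟨S, hS, habove, hmem⟩ := hKg
          have hsub1 : insert k₀ S ⊆ S ∪ K := by
            intro x hx
            rcases Finset.mem_insert.1 hx with h | h
            · exact Finset.mem_union.2 (Or.inr (h ▸ hk₀K))
            · exact Finset.mem_union.2 (Or.inl h)
          have hins : insert k₀ S ∈ ℱ := her _ hmem _ hsub1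
          have hab : ∀ x ∈ S, x < k₀ := fun x hx => habove x hx k₀ hk₀K
          have hS'mem : insert k₀ S ∈ 𝒜' := h𝒜'mem S hS k₀ hk₀U hab hins
          have hKg' : K ∩ s' ∈ gfam ℱ 𝒜' := by
            refine ⟨insert k₀ S, hS'mem, ?_, ?_⟩
            · intro x hx k hk
              have hks' : k ∈ s' := (Finset.mem_inter.1 hk).2
              rcases Finset.mem_insert.1 hx with h | h
              · exact h ▸ lt_of_le_of_lt (hUle k₀ hk₀U) (hs'N k hks')
              · exact habove x h k (Finset.mem_inter.1 hk).1
            · refine her _ hmem _ ?_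
              intro x hx
              rcases Finset.mem_union.1 hx with h | h
              · exact hsub1 h
              · exact Finset.mem_union.2 (Or.inr (Finset.mem_inter.1 h).1)
          have hKs'bd : (∑ m ∈ K ∩ s', w' m) < ε / 2 :=
            hw'bd _ (Finset.inter_subset_right) hKg'
          push_cast
          nlinarith [hKU, hKs'bd]
  -- conclude: normalize the r-block construction
  obtain ⟨U, w, hUN, hw0, hwz, hwsum, hwbd⟩ := blocks r
  refine ⟨U, fun m => w m / r, hUN, fun m => div_nonneg (hw0 m) (le_of_lt hrpos), ?_, ?_, ?_⟩
  · intro m hm; show w m / r = 0; rw [hwz m hm, zero_div]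
  · show (∑ m ∈ U, w m / (r:ℝ)) = 1
    rw [← Finset.sum_div, hwsum, div_self (ne_of_gt hrpos)]
  · intro K hK hKg
    show (∑ m ∈ K, w m / (r:ℝ)) < ε
    rw [← Finset.sum_div]
    have h1 : (∑ m ∈ K, w m) ≤ 1 + r * (ε / 2) := hwbd K hK hKg
    have h2 : (∑ m ∈ K, w m) / r ≤ (1 + r * (ε / 2)) / r :=
      (div_le_div_iff_of_pos_right hrpos).2 h1
    have h3 : (1 + (r:ℝ) * (ε / 2)) / r = 1 / r + ε / 2 := by
      field_simp
    calc (∑ m ∈ K, w m) / r ≤ (1 + r * (ε / 2)) / r := h2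
      _ = 1 / r + ε / 2 := h3
      _ < ε / 2 + ε / 2 := by linarith
      _ = ε := by ring

private lemma ptak_chain (ℱ : Set (Finset ℕ)) (her : ∀ K ∈ ℱ, ∀ K' ⊆ K, K' ∈ ℱ)
    (δ : ℝ) (hδ : 0 < δ)
    (hP : ∀ (s : Finset ℕ) (w : ℕ → ℝ), (∀ m, 0 ≤ w m) → (∑ m ∈ s, w m) = 1 →
      ∃ K, K ∈ ℱ ∧ K ⊆ s ∧ δ ≤ ∑ m ∈ K, w m) :
    ∃ C : ℕ → Finset ℕ, (∀ r, C r ∈ ℱ) ∧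
      ∀ r, ∃ k, (∀ x ∈ C r, x < k) ∧ C (r + 1) = insert k (C r) := by
  by_contra hno
  have hwf : WellFounded (ptakRel ℱ) := by
    constructor
    intro a
    by_contra ha
    have key : ∀ x : {S // ¬Acc (ptakRel ℱ) S}, ∃ y : {S // ¬Acc (ptakRel ℱ) S},
        ptakRel ℱ y.1 x.1 := by
      rintro ⟨x, hx⟩
      obtain ⟨b, hb1, hb2⟩ := exists_not_acc_lt_of_not_acc hx
      exact ⟨⟨b, hb1⟩, hb2⟩
    choose f hf using key
    set g : ℕ → Finset ℕ := fun n => (f^[n] ⟨a, ha⟩).1 with hg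
    have hstep : ∀ n, ptakRel ℱ (g (n + 1)) (g n) := by
      intro n
      have : f^[n + 1] ⟨a, ha⟩ = f (f^[n] ⟨a, ha⟩) := Function.iterate_succ_apply' f n _
      simp only [hg, this]
      exact hf _
    exact hno ⟨fun r => g (r + 1), fun r => (hstep r).1, fun r => (hstep (r + 1)).2⟩
  letI : IsWellFounded (Finset ℕ) (ptakRel ℱ) := ⟨hwf⟩
  obtain ⟨s, w, _, hw0, _, hsum, hbd⟩ := ptak_ind ℱ her (IsWellFounded.rank (ptakRel ℱ))
    (fun h => IsWellFounded.rank_lt_of_rel h)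
    (Order.succ (IsWellFounded.rank (ptakRel ℱ) ∅)) {∅}
    (by intro S hS; rw [Finset.mem_singleton] at hS; rw [hS]; exact Order.lt_succ _) δ hδ 0
  obtain ⟨K, hKF, hKs, hKδ⟩ := hP s w hw0 hsum
  have hKg : K ∈ gfam ℱ {∅} := ⟨∅, by simp, by simp, by simpa using hKF⟩
  exact absurd hKδ (not_le.2 (hbd K hKs hKg))

/-! ### Analytic auxiliary lemmas -/

section Aux

variable {n : ℕ} {X : Fin n → Type*} [∀ i, NormedAddCommGroup (X i)] [∀ i, NormedSpace ℝ (X i)]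
  {Y : Type*} [NormedAddCommGroup Y] [NormedSpace ℝ Y]

/-- Evaluation at a point as a continuous linear functional on multilinear forms. -/
private noncomputable def evalCLM (x : (i : Fin n) → X i) :
    ContinuousMultilinearMap ℝ X ℝ →L[ℝ] ℝ :=
  LinearMap.mkContinuous
    { toFun := fun φ => φ x
      map_add' := fun φ ψ => rfl
      map_smul' := fun c φ => rfl }
    (∏ i, ‖x i‖)
    (fun φ => by simpa [mul_comm] using φ.le_opNorm x)

private lemma uniform_bound (u : ℕ → ((i : Fin n) → X i))
    (hu : ∀ φ : ContinuousMultilinearMap ℝ X ℝ, ∃ L : ℝ, Tendsto (fun k => φ (u k)) atTop (𝓝 L)) :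
    ∃ R : ℝ, ∀ k (φ : ContinuousMultilinearMap ℝ X ℝ), ‖φ‖ ≤ 1 → |φ (u k)| ≤ R := by
  obtain ⟨R, hR⟩ := banach_steinhaus (g := fun k => evalCLM (X := X) (u k)) (fun φ => by
    obtain ⟨L, hL⟩ := hu φ
    obtain ⟨C, hC⟩ := (hL.norm.bddAbove_range)
    exact ⟨C, fun k => hC ⟨k, rfl⟩⟩)
  refine ⟨R, fun k φ hφ => ?_⟩
  calc |φ (u k)| = ‖evalCLM (X := X) (u k) φ‖ := rfl
    _ ≤ ‖evalCLM (X := X) (u k)‖ * ‖φ‖ := (evalCLM (X := X) (u k)).le_opNorm φ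
    _ ≤ R * 1 :=
        mul_le_mul (hR k) hφ (norm_nonneg _) ((norm_nonneg _).trans (hR k))
    _ = R := mul_one R

private lemma ult_lim (𝒰 : Ultrafilter ℕ) (g : ℕ → ℝ) (C : ℝ) (h : ∀ r, |g r| ≤ C) :
    ∃ y, Tendsto g 𝒰 (𝓝 y) := by
  have hle : (𝒰.map g : Filter ℝ) ≤ 𝓟 (Set.Icc (-C) C) := by
    rw [le_principal_iff]
    show g ⁻¹' (Set.Icc (-C) C) ∈ 𝒰
    have : g ⁻¹' (Set.Icc (-C) C) = Set.univ := by
      ext r; simp [abs_le.1 (h r)]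
    rw [this]; exact Filter.univ_mem
  obtain ⟨y, _, hlim⟩ := isCompact_Icc.ultrafilter_le_nhds (𝒰.map g) hle
  exact ⟨y, hlim⟩

/-- A norm-bounded sequence of multilinear forms has a pointwise cluster form
along any ultrafilter. -/
private lemma exists_weak_cluster (𝒰 : Ultrafilter ℕ)
    (φs : ℕ → ContinuousMultilinearMap ℝ X ℝ) (hφ : ∀ r, ‖φs r‖ ≤ 1) :
    ∃ ψ : ContinuousMultilinearMap ℝ X ℝ,
      ∀ x, Tendsto (fun r => φs r x) 𝒰 (𝓝 (ψ x)) := by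
  have hbd : ∀ x : (i : Fin n) → X i, ∀ r, |φs r x| ≤ ∏ i, ‖x i‖ := by
    intro x r
    calc |φs r x| ≤ ‖φs r‖ * ∏ i, ‖x i‖ := (φs r).le_opNorm x
      _ ≤ 1 * ∏ i, ‖x i‖ := mul_le_mul_of_nonneg_right (hφ r)
          (Finset.prod_nonneg fun i _ => norm_nonneg _)
      _ = _ := one_mul _
  have h : ∀ x : (i : Fin n) → X i, ∃ y, Tendsto (fun r => φs r x) 𝒰 (𝓝 y) :=
    fun x => ult_lim 𝒰 _ (∏ i, ‖x i‖) (hbd x)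
  choose F htd using h
  have hbound : ∀ x, ‖F x‖ ≤ 1 * ∏ i, ‖x i‖ := by
    intro x
    rw [one_mul]
    exact le_of_tendsto (htd x).abs (Eventually.of_forall (hbd x))
  refine ⟨MultilinearMap.mkContinuous
    { toFun := F
      map_update_add' := by
        intro inst m i a b
        refine tendsto_nhds_unique (htd _) ?_
        have he : (fun r => φs r (update m i (a + b)))
            = fun r => φs r (update m i a) + φs r (update m i b) :=
          funext fun r => (φs r).map_update_add m i a b
        rw [he]
        exact (htd _).add (htd _)
      map_update_smul' := by
        intro inst m i c a
        refine tendsto_nhds_unique (htd _) ?_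
        have he : (fun r => φs r (update m i (c • a)))
            = fun r => c • φs r (update m i a) :=
          funext fun r => (φs r).map_update_smul m i c a
        rw [he]
        exact (htd _).const_smul c } 1 hbound, fun x => htd x⟩

/-- The weighted form of the Lipschitz `p`-summing inequality, obtained by scaling
one coordinate of each point by `(w m) ^ (1/p)`. -/
private lemma weighted_summing (p c : ℝ) (hp : 1 ≤ p) (hc : 0 ≤ c)
    (T : ContinuousMultilinearMap ℝ X Y) (hT : LipschitzPSumming p c T) (i₀ : Fin n)
    (k : ℕ) (A B : Fin k → ((i : Fin n) → X i)) (w : Fin k → ℝ) (hw : ∀ m, 0 ≤ w m) :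
    (∑ m, w m * ‖T (A m) - T (B m)‖ ^ p) ≤
      c ^ p * ⨆ φ : {φ : ContinuousMultilinearMap ℝ X ℝ // ‖φ‖ ≤ 1},
        ∑ m, w m * |φ.1 (A m) - φ.1 (B m)| ^ p := by
  classical
  have hp0 : (0:ℝ) < p := lt_of_lt_of_le one_pos hp
  have hp0' : p ≠ 0 := ne_of_gt hp0
  haveI : Nonempty {φ : ContinuousMultilinearMap ℝ X ℝ // ‖φ‖ ≤ 1} :=
    ⟨⟨0, by simp⟩⟩
  set r : Fin k → ℝ := fun m => (w m) ^ (1/p) with hr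
  have hr0 : ∀ m, 0 ≤ r m := fun m => Real.rpow_nonneg (hw m) _
  have hrp : ∀ m, (r m) ^ p = w m := by
    intro m
    rw [hr, ← Real.rpow_mul (hw m), one_div_mul_cancel hp0', Real.rpow_one]
  -- scaled families
  set U : Fin k → ((i : Fin n) → X i) := fun m => update (A m) i₀ (r m • (A m) i₀) with hU
  set V : Fin k → ((i : Fin n) → X i) := fun m => update (B m) i₀ (r m • (B m) i₀) with hV
  have hTU : ∀ m, T (U m) = r m • T (A m) := by
    intro m
    rw [hU]
    show T (update (A m) i₀ (r m • (A m) i₀)) = r m • T (A m)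
    rw [T.map_update_smul (A m) i₀ (r m) ((A m) i₀), Function.update_eq_self]
  have hTV : ∀ m, T (V m) = r m • T (B m) := by
    intro m
    rw [hV]
    show T (update (B m) i₀ (r m • (B m) i₀)) = r m • T (B m)
    rw [T.map_update_smul (B m) i₀ (r m) ((B m) i₀), Function.update_eq_self]
  have hφU : ∀ (φ : ContinuousMultilinearMap ℝ X ℝ) m,
      φ (U m) - φ (V m) = r m * (φ (A m) - φ (B m)) := by
    intro φ m
    rw [hU, hV]
    show φ (update (A m) i₀ (r m • (A m) i₀)) - φ (update (B m) i₀ (r m • (B m) i₀)) = _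
    rw [φ.map_update_smul (A m) i₀ (r m) ((A m) i₀), Function.update_eq_self,
      φ.map_update_smul (B m) i₀ (r m) ((B m) i₀), Function.update_eq_self]
    simp only [smul_eq_mul]
    ring
  -- LHS of the p-summing inequality for (U, V)
  have hLHS : (∑ m, ‖T (U m) - T (V m)‖ ^ p) = ∑ m, w m * ‖T (A m) - T (B m)‖ ^ p := by
    refine Finset.sum_congr rfl (fun m _ => ?_)
    rw [hTU m, hTV m, ← smul_sub, norm_smul, Real.norm_eq_abs, abs_of_nonneg (hr0 m),
      Real.mul_rpow (hr0 m) (norm_nonneg _), hrp m]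
  have hRHSφ : ∀ (φ : ContinuousMultilinearMap ℝ X ℝ),
      (∑ m, |φ (U m) - φ (V m)| ^ p) = ∑ m, w m * |φ (A m) - φ (B m)| ^ p := by
    intro φ
    refine Finset.sum_congr rfl (fun m _ => ?_)
    rw [hφU φ m, abs_mul, abs_of_nonneg (hr0 m),
      Real.mul_rpow (hr0 m) (abs_nonneg _), hrp m]
  -- the sup of the weighted sums
  set S : {φ : ContinuousMultilinearMap ℝ X ℝ // ‖φ‖ ≤ 1} → ℝ :=
    fun φ => ∑ m, w m * |φ.1 (A m) - φ.1 (B m)| ^ p with hS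
  have hS0 : ∀ φ, 0 ≤ S φ := by
    intro φ
    exact Finset.sum_nonneg (fun m _ =>
      mul_nonneg (hw m) (Real.rpow_nonneg (abs_nonneg _) _))
  have hSbdd : BddAbove (Set.range S) := by
    refine ⟨∑ m, w m * ((∏ i, ‖A m i‖) + ∏ i, ‖B m i‖) ^ p, ?_⟩
    rintro x ⟨φ, rfl⟩
    refine Finset.sum_le_sum (fun m _ => ?_)
    refine mul_le_mul_of_nonneg_left ?_ (hw m)
    refine Real.rpow_le_rpow (abs_nonneg _) ?_ (le_of_lt hp0)
    calc |φ.1 (A m) - φ.1 (B m)| ≤ |φ.1 (A m)| + |φ.1 (B m)| := abs_sub _ _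
      _ ≤ (∏ i, ‖A m i‖) + ∏ i, ‖B m i‖ := by
          refine add_le_add ?_ ?_
          · calc |φ.1 (A m)| ≤ ‖φ.1‖ * ∏ i, ‖A m i‖ := φ.1.le_opNorm _
              _ ≤ 1 * ∏ i, ‖A m i‖ := mul_le_mul_of_nonneg_right φ.2
                  (Finset.prod_nonneg (fun i _ => norm_nonneg _))
              _ = _ := one_mul _
          · calc |φ.1 (B m)| ≤ ‖φ.1‖ * ∏ i, ‖B m i‖ := φ.1.le_opNorm _
              _ ≤ 1 * ∏ i, ‖B m i‖ := mul_le_mul_of_nonneg_right φ.2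
                  (Finset.prod_nonneg (fun i _ => norm_nonneg _))
              _ = _ := one_mul _
  set Q : ℝ := ⨆ φ, S φ with hQ
  have hQ0 : 0 ≤ Q := le_trans (hS0 _) (le_ciSup hSbdd (Classical.arbitrary _))
  -- apply the hypothesis
  have hmain := hT k U V
  rw [hLHS] at hmain
  have hsup_le : (⨆ φ : {φ : ContinuousMultilinearMap ℝ X ℝ // ‖φ‖ ≤ 1},
      (∑ m, |φ.1 (U m) - φ.1 (V m)| ^ p) ^ (1 / p)) ≤ Q ^ (1 / p) := by
    refine ciSup_le (fun φ => ?_)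
    rw [hRHSφ φ.1]
    exact Real.rpow_le_rpow (hS0 φ) (le_ciSup hSbdd φ) (by positivity)
  have hchain : (∑ m, w m * ‖T (A m) - T (B m)‖ ^ p) ^ (1 / p) ≤ c * Q ^ (1 / p) :=
    le_trans hmain (mul_le_mul_of_nonneg_left hsup_le hc)
  have hL0 : 0 ≤ ∑ m, w m * ‖T (A m) - T (B m)‖ ^ p :=
    Finset.sum_nonneg (fun m _ => mul_nonneg (hw m) (Real.rpow_nonneg (norm_nonneg _) _))
  calc (∑ m, w m * ‖T (A m) - T (B m)‖ ^ p)
      = ((∑ m, w m * ‖T (A m) - T (B m)‖ ^ p) ^ (1/p)) ^ p := by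
        rw [← Real.rpow_mul hL0, one_div_mul_cancel hp0', Real.rpow_one]
    _ ≤ (c * Q ^ (1/p)) ^ p := Real.rpow_le_rpow (Real.rpow_nonneg hL0 _) hchain (le_of_lt hp0)
    _ = c ^ p * Q := by
        rw [Real.mul_rpow hc (Real.rpow_nonneg hQ0 _), ← Real.rpow_mul hQ0,
          one_div_mul_cancel hp0', Real.rpow_one]

end Aux

/-- Every Lipschitz `p`-summing continuous multilinear operator is Dunford–Pettis. -/
theorem isDunfordPettis_of_lipschitzPSumming {n : ℕ} {X : Fin n → Type*}
    [∀ i, NormedAddCommGroup (X i)] [∀ i, NormedSpace ℝ (X i)] [∀ i, CompleteSpace (X i)]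
    {Y : Type*} [NormedAddCommGroup Y] [NormedSpace ℝ Y] [CompleteSpace Y]
    (p : ℝ) (hp : 1 ≤ p) (T : ContinuousMultilinearMap ℝ X Y)
    (hT : ∃ c : ℝ, 0 ≤ c ∧ LipschitzPSumming p c T) :
    IsDunfordPettisMultilinear T := by
  classical
  obtain ⟨c, hc0, hsm⟩ := hT
  intro u hu
  have hp0 : (0:ℝ) < p := lt_of_lt_of_le one_pos hp
  have hp0' : p ≠ 0 := ne_of_gt hp0
  rcases Nat.eq_zero_or_pos n with hn0 | hnpos
  · -- trivial case `n = 0`: the sequence is constant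
    subst hn0
    refine ⟨T (u 0), ?_⟩
    have hconst : ∀ k, u k = u 0 := fun k => funext (fun i => Fin.elim0 i)
    have : (fun k => T (u k)) = fun _ => T (u 0) := funext (fun k => by rw [hconst k])
    rw [this]
    exact tendsto_const_nhds
  set i₀ : Fin n := ⟨0, hnpos⟩
  by_cases hcs : CauchySeq (fun k => T (u k))
  · exact cauchySeq_tendsto_of_complete hcs
  exfalso
  -- a uniform bound on the sequence against the unit ball of forms
  obtain ⟨R, hR⟩ := uniform_bound u hu
  set R' : ℝ := |R| + 1 with hR'
  have hR'pos : 0 < R' := by positivity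
  have hRle : ∀ k (φ : ContinuousMultilinearMap ℝ X ℝ), ‖φ‖ ≤ 1 → |φ (u k)| ≤ R' :=
    fun k φ hφ => le_trans (hR k φ hφ) (le_trans (le_abs_self R) (by simp [hR']))
  -- failure of the Cauchy property
  rw [Metric.cauchySeq_iff] at hcs
  push_neg at hcs
  obtain ⟨ε, hε, hdiv⟩ := hcs
  choose a ha b hb hab using hdiv
  have hΔ : ∀ N, ε ≤ ‖T (u (a N)) - T (u (b N))‖ := by
    intro N
    have := hab N
    rwa [dist_eq_norm] at this
  -- the constant must be positive
  rcases hc0.eq_or_lt with hceq | hcpos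
  · -- c = 0 is absurd
    have h1 := weighted_summing p c hp hc0 T hsm i₀ 1 (fun _ => u (a 0)) (fun _ => u (b 0))
      (fun _ => 1) (fun _ => zero_le_one)
    simp only [Fin.sum_univ_one, one_mul] at h1
    rw [← hceq, Real.zero_rpow hp0', zero_mul] at h1
    have h2 : ε ^ p ≤ ‖T (u (a 0)) - T (u (b 0))‖ ^ p :=
      Real.rpow_le_rpow (le_of_lt hε) (hΔ 0) (le_of_lt hp0)
    have h3 : 0 < ε ^ p := Real.rpow_pos_of_pos hε p
    linarith
  -- main constants
  set θ : ℝ := ε ^ p / c ^ p with hθdef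
  have hcp : 0 < c ^ p := Real.rpow_pos_of_pos hcpos p
  have hθ : 0 < θ := div_pos (Real.rpow_pos_of_pos hε p) hcp
  set τ : ℝ := (θ / 4) ^ (1/p) with hτdef
  have hτpos : 0 < τ := Real.rpow_pos_of_pos (by positivity) _
  have hτp : τ ^ p = θ / 4 := by
    rw [hτdef, ← Real.rpow_mul (by positivity), one_div_mul_cancel hp0', Real.rpow_one]
  have h2R'p : (0:ℝ) < (2 * R') ^ p := Real.rpow_pos_of_pos (by positivity) p
  set δ₀ : ℝ := (θ / 4) / (2 * R') ^ p with hδ₀def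
  have hδ₀ : 0 < δ₀ := div_pos (by positivity) h2R'p
  -- the family of finite sets witnessed by a single form
  set ℱ : Set (Finset ℕ) := {K | ∃ φ : ContinuousMultilinearMap ℝ X ℝ, ‖φ‖ ≤ 1 ∧
    ∀ m ∈ K, τ ≤ |φ (u (a m)) - φ (u (b m))|} with hℱ
  have her : ∀ K ∈ ℱ, ∀ K' ⊆ K, K' ∈ ℱ := by
    rintro K ⟨φ, hφ1, hφ2⟩ K' hsub
    exact ⟨φ, hφ1, fun m hm => hφ2 m (hsub hm)⟩
  -- every convex mean gives a large set in ℱ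
  have hP : ∀ (s : Finset ℕ) (w : ℕ → ℝ), (∀ m, 0 ≤ w m) → (∑ m ∈ s, w m) = 1 →
      ∃ K, K ∈ ℱ ∧ K ⊆ s ∧ δ₀ ≤ ∑ m ∈ K, w m := by
    intro s w hw0 hwsum
    -- transfer the weighted inequality to sums over `s`
    have hconv : ∀ F : ℕ → ℝ,
        (∑ j : Fin s.card, F ((s.equivFin.symm j : ℕ))) = ∑ m ∈ s, F m := by
      intro F
      rw [← Finset.sum_coe_sort s F]
      exact (Fintype.sum_equiv s.equivFin _ _ (fun x => by simp)).symm
    have hws := weighted_summing p c hp hc0 T hsm i₀ s.card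
      (fun j => u (a ((s.equivFin.symm j : ℕ)))) (fun j => u (b ((s.equivFin.symm j : ℕ))))
      (fun j => w ((s.equivFin.symm j : ℕ))) (fun j => hw0 _)
    rw [hconv (fun m => w m * ‖T (u (a m)) - T (u (b m))‖ ^ p)] at hws
    have hsupeq : (⨆ φ : {φ : ContinuousMultilinearMap ℝ X ℝ // ‖φ‖ ≤ 1},
        ∑ j : Fin s.card, w ((s.equivFin.symm j : ℕ)) *
          |φ.1 (u (a ((s.equivFin.symm j : ℕ)))) - φ.1 (u (b ((s.equivFin.symm j : ℕ))))| ^ p)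
        = ⨆ φ : {φ : ContinuousMultilinearMap ℝ X ℝ // ‖φ‖ ≤ 1},
          ∑ m ∈ s, w m * |φ.1 (u (a m)) - φ.1 (u (b m))| ^ p := by
      refine iSup_congr (fun φ => ?_)
      exact hconv (fun m => w m * |φ.1 (u (a m)) - φ.1 (u (b m))| ^ p)
    rw [hsupeq] at hws
    -- the weighted sums over `s`
    set S : {φ : ContinuousMultilinearMap ℝ X ℝ // ‖φ‖ ≤ 1} → ℝ :=
      fun φ => ∑ m ∈ s, w m * |φ.1 (u (a m)) - φ.1 (u (b m))| ^ p with hSdef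
    haveI : Nonempty {φ : ContinuousMultilinearMap ℝ X ℝ // ‖φ‖ ≤ 1} := ⟨⟨0, by simp⟩⟩
    have hSbdd : BddAbove (Set.range S) := by
      refine ⟨(2 * R') ^ p, ?_⟩
      rintro x ⟨φ, rfl⟩
      have : S φ ≤ ∑ m ∈ s, w m * (2 * R') ^ p := by
        refine Finset.sum_le_sum (fun m _ => ?_)
        refine mul_le_mul_of_nonneg_left ?_ (hw0 m)
        refine Real.rpow_le_rpow (abs_nonneg _) ?_ (le_of_lt hp0)
        calc |φ.1 (u (a m)) - φ.1 (u (b m))|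
            ≤ |φ.1 (u (a m))| + |φ.1 (u (b m))| := abs_sub _ _
          _ ≤ R' + R' := add_le_add (hRle _ _ φ.2) (hRle _ _ φ.2)
          _ = 2 * R' := by ring
      rwa [← Finset.sum_mul, hwsum, one_mul] at this
    -- the lower bound ε^p ≤ LHS
    have hlow : ε ^ p ≤ ∑ m ∈ s, w m * ‖T (u (a m)) - T (u (b m))‖ ^ p := by
      have : (∑ m ∈ s, w m * ε ^ p) ≤ ∑ m ∈ s, w m * ‖T (u (a m)) - T (u (b m))‖ ^ p := by
        refine Finset.sum_le_sum (fun m _ => ?_)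
        exact mul_le_mul_of_nonneg_left
          (Real.rpow_le_rpow (le_of_lt hε) (hΔ m) (le_of_lt hp0)) (hw0 m)
      rwa [← Finset.sum_mul, hwsum, one_mul] at this
    have hQθ : θ ≤ ⨆ φ, S φ := by
      rw [hθdef, div_le_iff₀ hcp]
      calc ε ^ p ≤ ∑ m ∈ s, w m * ‖T (u (a m)) - T (u (b m))‖ ^ p := hlow
        _ ≤ c ^ p * ⨆ φ, S φ := hws
        _ = (⨆ φ, S φ) * c ^ p := mul_comm _ _
    obtain ⟨φ₀, hφ₀⟩ := exists_lt_of_lt_ciSup (lt_of_lt_of_le (by linarith : θ/2 < θ) hQθ)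
    -- the set of large indices
    set K : Finset ℕ := s.filter (fun m => τ ≤ |φ₀.1 (u (a m)) - φ₀.1 (u (b m))|) with hK
    refine ⟨K, ⟨φ₀.1, φ₀.2, fun m hm => (Finset.mem_filter.1 hm).2⟩,
      Finset.filter_subset _ _, ?_⟩
    -- Markov-type estimate
    have hsplit : S φ₀ = (∑ m ∈ K, w m * |φ₀.1 (u (a m)) - φ₀.1 (u (b m))| ^ p)
        + ∑ m ∈ s.filter (fun m => ¬ (τ ≤ |φ₀.1 (u (a m)) - φ₀.1 (u (b m))|)),
            w m * |φ₀.1 (u (a m)) - φ₀.1 (u (b m))| ^ p :=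
      (Finset.sum_filter_add_sum_filter_not s _ _).symm
    have hbig : (∑ m ∈ K, w m * |φ₀.1 (u (a m)) - φ₀.1 (u (b m))| ^ p)
        ≤ (∑ m ∈ K, w m) * (2 * R') ^ p := by
      rw [Finset.sum_mul]
      refine Finset.sum_le_sum (fun m _ => ?_)
      refine mul_le_mul_of_nonneg_left ?_ (hw0 m)
      refine Real.rpow_le_rpow (abs_nonneg _) ?_ (le_of_lt hp0)
      calc |φ₀.1 (u (a m)) - φ₀.1 (u (b m))|
          ≤ |φ₀.1 (u (a m))| + |φ₀.1 (u (b m))| := abs_sub _ _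
        _ ≤ R' + R' := add_le_add (hRle _ _ φ₀.2) (hRle _ _ φ₀.2)
        _ = 2 * R' := by ring
    have hsmall : (∑ m ∈ s.filter (fun m => ¬ (τ ≤ |φ₀.1 (u (a m)) - φ₀.1 (u (b m))|)),
        w m * |φ₀.1 (u (a m)) - φ₀.1 (u (b m))| ^ p) ≤ θ / 4 := by
      have h1 : ∀ m ∈ s.filter (fun m => ¬ (τ ≤ |φ₀.1 (u (a m)) - φ₀.1 (u (b m))|)),
          w m * |φ₀.1 (u (a m)) - φ₀.1 (u (b m))| ^ p ≤ w m * (θ / 4) := by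
        intro m hm
        refine mul_le_mul_of_nonneg_left ?_ (hw0 m)
        have h2 : |φ₀.1 (u (a m)) - φ₀.1 (u (b m))| ≤ τ :=
          le_of_lt (not_le.1 (Finset.mem_filter.1 hm).2)
        calc |φ₀.1 (u (a m)) - φ₀.1 (u (b m))| ^ p ≤ τ ^ p :=
            Real.rpow_le_rpow (abs_nonneg _) h2 (le_of_lt hp0)
          _ = θ / 4 := hτp
      calc (∑ m ∈ s.filter (fun m => ¬ (τ ≤ |φ₀.1 (u (a m)) - φ₀.1 (u (b m))|)),
          w m * |φ₀.1 (u (a m)) - φ₀.1 (u (b m))| ^ p)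
          ≤ ∑ m ∈ s.filter (fun m => ¬ (τ ≤ |φ₀.1 (u (a m)) - φ₀.1 (u (b m))|)),
              w m * (θ / 4) := Finset.sum_le_sum h1
        _ ≤ (∑ m ∈ s, w m) * (θ / 4) := by
            rw [← Finset.sum_mul]
            refine mul_le_mul_of_nonneg_right ?_ (by positivity)
            exact Finset.sum_le_sum_of_subset_of_nonneg (Finset.filter_subset _ _)
              (fun m _ _ => hw0 m)
        _ = θ / 4 := by rw [hwsum, one_mul]
    have hKw : θ / 4 ≤ (∑ m ∈ K, w m) * (2 * R') ^ p := by
      have := hφ₀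
      rw [hSdef] at this
      have h5 : θ / 2 < (∑ m ∈ K, w m) * (2 * R') ^ p + θ / 4 := by
        calc θ / 2 < S φ₀ := hφ₀
          _ = _ := hsplit
          _ ≤ _ := add_le_add hbig hsmall
      linarith
    rw [hδ₀def, div_le_iff₀ h2R'p]
    exact hKw
  -- apply the combinatorial lemma
  obtain ⟨C, hCmem, hCstep⟩ := ptak_chain ℱ her δ₀ hδ₀ hP
  have hCmono : Monotone C := by
    refine monotone_nat_of_le_succ (fun r => ?_)
    obtain ⟨k, _, he⟩ := hCstep r
    rw [he]
    exact Finset.subset_insert _ _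
  have hCcard : ∀ r, r ≤ (C r).card := by
    intro r
    induction r with
    | zero => exact Nat.zero_le _
    | succ r IHr =>
      obtain ⟨k, hk, he⟩ := hCstep r
      have hknot : k ∉ C r := fun hmem => lt_irrefl k (hk k hmem)
      rw [he, Finset.card_insert_of_notMem hknot]
      omega
  -- the weak cluster form
  choose φs hφ1 hφ2 using (fun r => (hCmem r : ∃ φ : ContinuousMultilinearMap ℝ X ℝ,
    ‖φ‖ ≤ 1 ∧ ∀ m ∈ C r, τ ≤ |φ (u (a m)) - φ (u (b m))|))
  set 𝒰 : Ultrafilter ℕ := Ultrafilter.of atTop with h𝒰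
  have h𝒰le : (𝒰 : Filter ℕ) ≤ atTop := Ultrafilter.of_le _
  obtain ⟨ψ, hψ⟩ := exists_weak_cluster 𝒰 φs hφ1
  -- every element of the chain gives a large value against ψ
  have hψτ : ∀ r₀, ∀ m ∈ C r₀, τ ≤ |ψ (u (a m)) - ψ (u (b m))| := by
    intro r₀ m hm
    have hev : ∀ᶠ r in (𝒰 : Filter ℕ), τ ≤ |φs r (u (a m)) - φs r (u (b m))| := by
      refine Eventually.filter_mono h𝒰le ?_
      exact eventually_atTop.2 ⟨r₀, fun r hr => hφ2 r m (hCmono hr hm)⟩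
    exact ge_of_tendsto ((hψ _).sub (hψ _)).abs hev
  -- but these values tend to 0
  obtain ⟨L, hL⟩ := hu ψ
  have hta : Tendsto a atTop atTop := tendsto_atTop_mono ha tendsto_id
  have htb : Tendsto b atTop atTop := tendsto_atTop_mono hb tendsto_id
  have h1 : Tendsto (fun m => ψ (u (a m))) atTop (𝓝 L) := hL.comp hta
  have h2 : Tendsto (fun m => ψ (u (b m))) atTop (𝓝 L) := hL.comp htb
  have h3 : Tendsto (fun m => |ψ (u (a m)) - ψ (u (b m))|) atTop (𝓝 0) := by
    have h4 := (h1.sub h2).abs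
    rwa [sub_self, abs_zero] at h4
  have hev0 : ∀ᶠ m in atTop, |ψ (u (a m)) - ψ (u (b m))| < τ :=
    h3.eventually_lt_const hτpos
  obtain ⟨M, hM⟩ := eventually_atTop.1 hev0
  have hex : ∃ m ∈ C (M + 1), M ≤ m := by
    by_contra hno2
    push_neg at hno2
    have hsub : C (M + 1) ⊆ Finset.range M := fun m hm => Finset.mem_range.2 (hno2 m hm)
    have h5 := Finset.card_le_card hsub
    rw [Finset.card_range] at h5
    have h6 := hCcard (M + 1)
    omega
  obtain ⟨m, hmC, hmM⟩ := hex
  exact absurd (hψτ (M + 1) m hmC) (not_le.2 (hM m hmM))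
end

section
/- Let X₁, …, Xₙ, Y be real Banach spaces. Suppose that every sequence (u^k)_k in X₁ × ⋯ × Xₙ with sup_k ‖u₁^k‖ ⋯ ‖uₙ^k‖ < ∞ admits a subsequence (u^{k_l})_l such that the scalar sequence (φ(u^{k_l}))_l converges for every continuous n-linear form φ on X₁ × ⋯ × Xₙ. Then every Dunford–Pettis continuous n-linear operator T : X₁ × ⋯ × Xₙ → Y is compact, i.e., T maps B₁ × ⋯ × Bₙ to a relatively compact subset of Y whenever each Bᵢ is a bounded subset of Xᵢ. -/
open scoped BigOperators Topology
open Filter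

/-- A continuous multilinear operator is compact if it maps products of bounded sets to
relatively compact sets. -/
def IsCompactMultilinear {n : ℕ} {X : Fin n → Type*} [∀ i, NormedAddCommGroup (X i)]
    [∀ i, NormedSpace ℝ (X i)] {Y : Type*} [NormedAddCommGroup Y] [NormedSpace ℝ Y]
    (T : ContinuousMultilinearMap ℝ X Y) : Prop :=
  ∀ B : (i : Fin n) → Set (X i), (∀ i, Bornology.IsBounded (B i)) →
    IsCompact (closure (⇑T '' {x : (i : Fin n) → X i | ∀ i, x i ∈ B i}))

/-- If every bounded sequence in the Segre cone of `X₁, …, Xₙ` has a weakly Cauchy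
subsequence, then every Dunford–Pettis continuous multilinear operator is compact. -/
theorem isCompact_of_isDunfordPettis {n : ℕ} {X : Fin n → Type*}
    [∀ i, NormedAddCommGroup (X i)] [∀ i, NormedSpace ℝ (X i)] [∀ i, CompleteSpace (X i)]
    {Y : Type*} [NormedAddCommGroup Y] [NormedSpace ℝ Y] [CompleteSpace Y]
    (hweak : ∀ u : ℕ → ((i : Fin n) → X i), (∃ M : ℝ, ∀ k, (∏ i, ‖u k i‖) ≤ M) →
      ∃ σ : ℕ → ℕ, StrictMono σ ∧
        ∀ φ : ContinuousMultilinearMap ℝ X ℝ,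
          ∃ L : ℝ, Tendsto (fun l => φ (u (σ l))) atTop (𝓝 L))
    (T : ContinuousMultilinearMap ℝ X Y) (hT : IsDunfordPettisMultilinear T) :
    IsCompactMultilinear T := by
  intro B hB
  set S : Set ((i : Fin n) → X i) := {x | ∀ i, x i ∈ B i} with hS
  -- choose norm bounds on each Bᵢ
  choose C hC using fun i => (isBounded_iff_forall_norm_le.1 (hB i))
  -- key: every sequence in T '' S has a convergent subsequence
  have key : ∀ y : ℕ → Y, (∀ k, y k ∈ ⇑T '' S) →
      ∃ z : Y, ∃ σ : ℕ → ℕ, StrictMono σ ∧ Tendsto (y ∘ σ) atTop (𝓝 z) := by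
    intro y hy
    choose u hu hTu using hy
    have hbound : ∃ M : ℝ, ∀ k, (∏ i, ‖u k i‖) ≤ M := by
      refine ⟨∏ i, C i, fun k => ?_⟩
      exact Finset.prod_le_prod (fun i _ => norm_nonneg _)
        (fun i _ => hC i _ (hu k i))
    obtain ⟨σ, hσ, hφ⟩ := hweak u hbound
    obtain ⟨z, hz⟩ := hT (u ∘ σ) (fun φ => hφ φ)
    refine ⟨z, σ, hσ, ?_⟩
    have : (y ∘ σ) = fun l => T ((u ∘ σ) l) := by
      funext l; simp [Function.comp, hTu]
    rw [this]
    exact hz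
  -- deduce sequential compactness of the closure
  have hseq : IsSeqCompact (closure (⇑T '' S)) := by
    intro x hx
    -- approximate each x k by a point of the image
    have happrox : ∀ k : ℕ, ∃ p ∈ ⇑T '' S, dist (x k) p < 1 / (k + 1) := by
      intro k
      have hk : (0 : ℝ) < 1 / (k + 1) := by positivity
      exact Metric.mem_closure_iff.1 (hx k) _ hk
    choose y hy hdist using happrox
    obtain ⟨z, σ, hσ, hz⟩ := key y hy
    refine ⟨z, ?_, σ, hσ, ?_⟩
    · exact mem_closure_of_tendsto hz (Eventually.of_forall fun l => hy (σ l))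
    · -- x ∘ σ tends to z since dist (x (σ l)) (y (σ l)) → 0
      have hd : Tendsto (fun l => dist ((x ∘ σ) l) ((y ∘ σ) l)) atTop (𝓝 0) := by
        refine squeeze_zero (fun l => dist_nonneg) (fun l => ?_)
          tendsto_one_div_add_atTop_nhds_zero_nat
        refine (hdist (σ l)).le.trans (one_div_le_one_div_of_le (by positivity) ?_)
        have := hσ.le_apply (x := l)
        exact_mod_cast Nat.add_le_add_right this 1
      exact hz.congr_dist (by simpa [Function.comp, dist_comm] using hd)
  exact hseq.isCompact
end
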